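/- For every r ≥ 2, the polynomial d(z) = 2z^{2r+4} - 2z^{r+4} - z³ + 2z^{r+2} - z² - z + 1 satisfies: d(z) > 0 for all z ∈ [-3/4, 0], d(1/2) > 0, d(3/4) < 0, d(0) = 1, and d'(z) < 0 on [0, 1/2]; hence its real root of smallest absolute value lies in (1/2, 3/4). -/

import Mathlib

/-- d(z) = 2z^{2r+4} - 2z^{r+4} - z³ + 2z^{r+2} - z² - z + 1. -/
def dEven (r : ℕ) (z : ℝ) : ℝ :=
  2 * z ^ (2 * r + 4) - 2 * z ^ (r + 4) - z ^ 3 + 2 * z ^ (r + 2) - z ^ 2 - z + 1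

lemma dEven_hasDerivAt (r : ℕ) (z : ℝ) :
    HasDerivAt (dEven r)
      ((4*(r:ℝ)+8) * z^(2*r+3) - (2*(r:ℝ)+8) * z^(r+3) - 3*z^2
        + (2*(r:ℝ)+4) * z^(r+1) - 2*z - 1) z := by
  have H := ((((((hasDerivAt_pow (2*r+4) z).const_mul (2:ℝ)).sub
      ((hasDerivAt_pow (r+4) z).const_mul (2:ℝ))).sub (hasDerivAt_pow 3 z)).add
      ((hasDerivAt_pow (r+2) z).const_mul (2:ℝ))).sub (hasDerivAt_pow 2 z)).sub
      (hasDerivAt_id z) |>.add_const 1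
  refine H.congr_deriv ?_
  have e1 : 2*r+4-1 = 2*r+3 := by omega
  have e2 : r+4-1 = r+3 := by omega
  have e3 : r+2-1 = r+1 := by omega
  rw [e1, e2, e3]
  push_cast
  ring

lemma dEven_continuous (r : ℕ) : Continuous (dEven r) := by
  unfold dEven; fun_prop

lemma aux1 (s : ℕ) : (s:ℝ) + 4 ≤ 2^(s+2) := by
  induction s with
  | zero => norm_num
  | succ n ih =>
    have h : (2:ℝ)^(n+1+2) = 2*2^(n+2) := by ring
    have h1 : (1:ℝ) ≤ 2^(n+2) := one_le_pow₀ (by norm_num)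
    rw [h]; push_cast; linarith

lemma aux2 (s : ℕ) : 4*(s:ℝ) + 16 ≤ 2^(2*s+4) := by
  have h := aux1 s
  have hs : (0:ℝ) ≤ (s:ℝ) := Nat.cast_nonneg s
  have hsq : ((s:ℝ)+4)*((s:ℝ)+4) ≤ 2^(s+2) * 2^(s+2) :=
    mul_le_mul h h (by linarith) (by positivity)
  have hpe : (2:ℝ)^(2*s+4) = 2^(s+2) * 2^(s+2) := by
    rw [← pow_add]; ring_nf
  rw [hpe]
  nlinarith [hsq, hs, sq_nonneg (s:ℝ)]

lemma c1 (s : ℕ) : (2*(s:ℝ)+8) * (1/2)^s ≤ 8 := by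
  have hp : (0:ℝ) < 2^s := by positivity
  have he : ((1:ℝ)/2)^s = 1/2^s := by rw [div_pow, one_pow]
  have h4 : (2:ℝ)^(s+2) = 4*2^s := by ring
  have := aux1 s
  rw [he, mul_one_div, div_le_iff₀ hp]
  nlinarith

lemma c2 (s : ℕ) : (4*(s:ℝ)+8+8) * (1/2)^(2*s+4) ≤ 1 := by
  have hp : (0:ℝ) < 2^(2*s+4) := by positivity
  have he : ((1:ℝ)/2)^(2*s+4) = 1/2^(2*s+4) := by rw [div_pow, one_pow]
  have := aux2 s
  rw [he, mul_one_div, div_le_one hp]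
  linarith

lemma L1 (r : ℕ) (hr : 2 ≤ r) : ∀ z ∈ Set.Icc (-3 / 4 : ℝ) 0, 0 < dEven r z := by
  intro z hz
  obtain ⟨hz1, hz2⟩ := hz
  have habs : |z| ≤ 3/4 := abs_le.mpr ⟨by linarith, by linarith⟩
  have h1 : 0 ≤ z ^ (2*r+4) := Even.pow_nonneg ⟨r+2, by ring⟩ z
  have hp4 : |z| ^ (r+2) ≤ |z| ^ 4 :=
    pow_le_pow_of_le_one (abs_nonneg z) (by linarith) (by omega)
  have hz4 : |z| ^ 4 = z ^ 4 := by
    rw [pow_abs, abs_of_nonneg (Even.pow_nonneg (by decide) z)]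
  have hple : |z ^ (r+2)| ≤ z ^ 4 := by rw [abs_pow]; exact hz4 ▸ hp4
  obtain ⟨hl, hu⟩ := abs_le.mp hple
  have h2 : 0 ≤ 1 - z^2 := by nlinarith
  have h2' : 1 - z^2 ≤ 1 := by nlinarith
  have hz40 : 0 ≤ z ^ 4 := Even.pow_nonneg (by decide) z
  have key : -(2*z^4) ≤ 2 * z^(r+2) * (1 - z^2) := by nlinarith
  have expand : dEven r z = 2*z^(2*r+4) + 2*z^(r+2)*(1-z^2) - z^3 - z^2 - z + 1 := by
    unfold dEven
    rw [show r+4 = (r+2)+2 by omega, pow_add]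
    ring
  rw [expand]
  nlinarith [h1, key, sq_nonneg z, sq_nonneg (z + 1/2), mul_nonneg (neg_nonneg.mpr hz2) (by linarith : (0:ℝ) ≤ z + 3/4), sq_nonneg (z^2 - 1/4)]

lemma L2 (r : ℕ) : 0 < dEven r (1/2 : ℝ) := by
  have expand : dEven r (1/2 : ℝ) = 2*(1/2:ℝ)^(2*r+4) + (3/2)*(1/2)^(r+2) + 1/8 := by
    unfold dEven
    rw [show r+4 = (r+2)+2 by omega, pow_add]
    norm_num
    ring
  rw [expand]; positivity

lemma L3 (r : ℕ) (hr : 2 ≤ r) : dEven r (3/4 : ℝ) < 0 := by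
  have h1 : ((3/4:ℝ))^(r+2) ≤ (3/4:ℝ)^4 :=
    pow_le_pow_of_le_one (by norm_num) (by norm_num) (by omega)
  have h2 : ((3/4:ℝ))^(2*r+4) ≤ (3/4:ℝ)^8 :=
    pow_le_pow_of_le_one (by norm_num) (by norm_num) (by omega)
  have expand : dEven r (3/4 : ℝ) = 2*(3/4:ℝ)^(2*r+4) + (7/8)*(3/4)^(r+2) - 47/64 := by
    unfold dEven
    rw [show r+4 = (r+2)+2 by omega, pow_add]
    norm_num
    ring
  rw [expand]
  nlinarith [h1, h2]

lemma L4 (r : ℕ) : dEven r 0 = 1 := by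
  unfold dEven
  rw [zero_pow (by omega), zero_pow (by omega), zero_pow (by omega)]
  norm_num

lemma L5 (r : ℕ) (hr : 2 ≤ r) : ∀ z ∈ Set.Icc (0:ℝ) (1/2), deriv (dEven r) z < 0 := by
  intro z hz
  obtain ⟨s, rfl⟩ : ∃ s, r = s + 2 := ⟨r-2, by omega⟩
  rw [(dEven_hasDerivAt _ z).deriv]
  obtain ⟨h0, h2'⟩ := hz
  have hz3 : (0:ℝ) ≤ z^3 := pow_nonneg h0 3
  have hzs : z ^ s ≤ (1/2:ℝ)^s := pow_le_pow_left₀ h0 h2' s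
  have hz2s : z ^ (2*s+4) ≤ (1/2:ℝ)^(2*s+4) := pow_le_pow_left₀ h0 h2' _
  have hA : z ^ ((s+2)+1) ≤ (1/2:ℝ)^s * z^3 := by
    rw [show (s+2)+1 = 3 + s by omega, pow_add]
    calc z^3 * z^s ≤ z^3 * (1/2)^s := mul_le_mul_of_nonneg_left hzs hz3
      _ = (1/2:ℝ)^s * z^3 := by ring
  have hB : z ^ (2*(s+2)+3) ≤ (1/2:ℝ)^(2*s+4) * z^3 := by
    rw [show 2*(s+2)+3 = 3 + (2*s+4) by omega, pow_add]
    calc z^3 * z^(2*s+4) ≤ z^3 * (1/2)^(2*s+4) := mul_le_mul_of_nonneg_left hz2s hz3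
      _ = (1/2:ℝ)^(2*s+4) * z^3 := by ring
  have hc1 := c1 s
  have hc2 := c2 s
  have hpow_s : (0:ℝ) ≤ (1/2:ℝ)^s := by positivity
  have t1 : (2*(↑(s+2):ℝ)+4) * z^((s+2)+1) ≤ 8 * z^3 := by
    push_cast
    calc (2*((s:ℝ)+2)+4) * z^((s+2)+1) ≤ (2*((s:ℝ)+2)+4) * ((1/2)^s * z^3) := by
          apply mul_le_mul_of_nonneg_left hA (by positivity)
      _ = ((2*(s:ℝ)+8) * (1/2)^s) * z^3 := by ring
      _ ≤ 8 * z^3 := mul_le_mul_of_nonneg_right hc1 hz3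
  have t2 : (4*(↑(s+2):ℝ)+8) * z^(2*(s+2)+3) ≤ 1 * z^3 := by
    push_cast
    calc (4*((s:ℝ)+2)+8) * z^(2*(s+2)+3) ≤ (4*((s:ℝ)+2)+8) * ((1/2)^(2*s+4) * z^3) := by
          apply mul_le_mul_of_nonneg_left hB (by positivity)
      _ = ((4*(s:ℝ)+8+8) * (1/2)^(2*s+4)) * z^3 := by ring
      _ ≤ 1 * z^3 := mul_le_mul_of_nonneg_right hc2 hz3
  have t3 : (0:ℝ) ≤ (2*(↑(s+2):ℝ)+8) * z^((s+2)+3) := by positivity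
  nlinarith [t1, t2, t3, sq_nonneg z, mul_nonneg (mul_nonneg h0 h0) (by linarith : (0:ℝ) ≤ 1/2 - z), h0, h2']

theorem dEven_smallest_root (r : ℕ) (hr : 2 ≤ r) :
    (∀ z ∈ Set.Icc (-3 / 4 : ℝ) 0, 0 < dEven r z) ∧
    0 < dEven r (1 / 2) ∧
    dEven r (3 / 4) < 0 ∧
    dEven r 0 = 1 ∧
    (∀ z ∈ Set.Icc (0 : ℝ) (1 / 2), deriv (dEven r) z < 0) ∧
    (∃ ρ ∈ Set.Ioo (1 / 2 : ℝ) (3 / 4), dEven r ρ = 0 ∧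
      ∀ z : ℝ, dEven r z = 0 → |ρ| ≤ |z|) := by
  have hL1 := L1 r hr
  have hL2 := L2 r
  have hL3 := L3 r hr
  have hL5 := L5 r hr
  have hcont := dEven_continuous r
  refine ⟨hL1, hL2, hL3, L4 r, hL5, ?_⟩
  -- the set of roots in [1/2, 3/4]
  set S : Set ℝ := Set.Icc (1/2 : ℝ) (3/4) ∩ {z | dEven r z = 0} with hSdef
  have hSne : S.Nonempty := by
    have hsub := intermediate_value_Icc' (by norm_num : (1/2:ℝ) ≤ 3/4) hcont.continuousOn
    have h0 : (0:ℝ) ∈ Set.Icc (dEven r (3/4)) (dEven r (1/2)) := ⟨le_of_lt hL3, le_of_lt hL2⟩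
    obtain ⟨x, hx, hdx⟩ := hsub h0
    exact ⟨x, hx, hdx⟩
  have hSbdd : BddBelow S := ⟨1/2, fun x hx => hx.1.1⟩
  have hSclosed : IsClosed S :=
    isClosed_Icc.inter (isClosed_eq hcont continuous_const)
  set ρ := sInf S with hρdef
  have hρS : ρ ∈ S := hSclosed.csInf_mem hSne hSbdd
  obtain ⟨⟨hρ1, hρ2⟩, hρ0⟩ := hρS
  have hρroot : dEven r ρ = 0 := hρ0
  have hρne1 : ρ ≠ 1/2 := by
    intro h; rw [h] at hρroot; linarith
  have hρne2 : ρ ≠ 3/4 := by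
    intro h; rw [h] at hρroot; linarith
  have hρlt : ρ < 3/4 := lt_of_le_of_ne hρ2 hρne2
  have hρgt : 1/2 < ρ := lt_of_le_of_ne hρ1 (Ne.symm hρne1)
  have hρpos : 0 < ρ := by linarith
  -- positivity on [0, 1/2]
  have hanti : StrictAntiOn (dEven r) (Set.Icc (0:ℝ) (1/2)) := by
    apply strictAntiOn_of_deriv_neg (convex_Icc _ _) hcont.continuousOn
    intro x hx
    rw [interior_Icc] at hx
    exact hL5 x (Set.Ioo_subset_Icc_self hx)
  have hpos01 : ∀ z ∈ Set.Icc (0:ℝ) (1/2), 0 < dEven r z := by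
    intro z hz
    rcases eq_or_lt_of_le hz.2 with h | h
    · rw [h]; exact hL2
    · exact lt_trans hL2 (hanti hz (by norm_num) h)
  refine ⟨ρ, ⟨hρgt, hρlt⟩, hρroot, ?_⟩
  intro z hz
  rw [abs_of_pos hρpos]
  rcases lt_or_ge z 0 with hneg | hpos
  · have hz34 : z < -3/4 := by
      by_contra h
      push_neg at h
      have := hL1 z ⟨by linarith, le_of_lt hneg⟩
      linarith [hz ▸ this]
    rw [abs_of_neg hneg]
    linarith
  · rcases le_or_gt z (1/2) with h12 | h12
    · exact absurd hz (ne_of_gt (hpos01 z ⟨hpos, h12⟩))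
    · rcases le_or_gt z (3/4) with h34 | h34
      · have hmem : z ∈ S := ⟨⟨le_of_lt h12, h34⟩, hz⟩
        rw [abs_of_pos (by linarith : (0:ℝ) < z)]
        exact csInf_le hSbdd hmem
      · rw [abs_of_pos (by linarith : (0:ℝ) < z)]
        linarith
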